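/- Consider the graded ring R = ℂ[u,e]/⟨e·u^{m-k}, u^m, (-d·u + (k-1)·e)·e⟩ with u, e in degree 1, where m > k ≥ 2 and d ≥ k-1 are integers. Then the monomials {1, u, ..., u^{m-1}, e, e·u, ..., e·u^{m-k-1}} form a ℂ-vector-space basis of R. -/

import Mathlib

open MvPolynomial

/-- The ideal `⟨e·u^(m-k), u^m, (-d·u + (k-1)·e)·e⟩` in `ℂ[u,e]`, with `u = X 0`, `e = X 1`. -/
noncomputable def SRIdeal (m k d : ℕ) : Ideal (MvPolynomial (Fin 2) ℂ) :=
  Ideal.span {X 1 * X 0 ^ (m - k), X 0 ^ m,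
    (C (-(d : ℂ)) * X 0 + C ((k : ℂ) - 1) * X 1) * X 1}

namespace SRAux

/-- Normal form of the monomial `u^(σ 0) e^(σ 1)` as a coordinate vector. -/
noncomputable def nf (m k : ℕ) (c : ℂ) (σ : Fin 2 →₀ ℕ) : Fin m ⊕ Fin (m - k) → ℂ :=
  if σ 1 = 0 then
    if h : σ 0 < m then Pi.single (Sum.inl ⟨σ 0, h⟩) 1 else 0
  else
    if h : σ 0 + (σ 1 - 1) < m - k then
      Pi.single (Sum.inr ⟨σ 0 + (σ 1 - 1), h⟩) (c ^ (σ 1 - 1)) else 0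

lemma nf_zero (m k : ℕ) (c : ℂ) {σ : Fin 2 →₀ ℕ} (h1 : σ 1 = 0) :
    nf m k c σ = if h : σ 0 < m then Pi.single (Sum.inl ⟨σ 0, h⟩) 1 else 0 := by
  unfold nf; rw [if_pos h1]

lemma nf_succ (m k : ℕ) (c : ℂ) {σ : Fin 2 →₀ ℕ} {b : ℕ} (h1 : σ 1 = b + 1) :
    nf m k c σ = if h : σ 0 + b < m - k then
      Pi.single (Sum.inr ⟨σ 0 + b, h⟩) (c ^ b) else 0 := by
  unfold nf
  simp only [h1, Nat.add_sub_cancel, Nat.succ_ne_zero, if_false]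

lemma nf_succ' (m k : ℕ) (c : ℂ) {σ : Fin 2 →₀ ℕ} {b j : ℕ} (h1 : σ 1 = b + 1)
    (h2 : σ 0 + b = j) :
    nf m k c σ = if h : j < m - k then Pi.single (Sum.inr ⟨j, h⟩) (c ^ b) else 0 := by
  subst h2; exact nf_succ m k c h1

noncomputable def psi (m k : ℕ) (c : ℂ) :
    MvPolynomial (Fin 2) ℂ →ₗ[ℂ] (Fin m ⊕ Fin (m - k) → ℂ) :=
  (basisMonomials (Fin 2) ℂ).constr ℂ (nf m k c)

lemma psi_monomial (m k : ℕ) (c : ℂ) (σ : Fin 2 →₀ ℕ) (a : ℂ) :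
    psi m k c (monomial σ a) = a • nf m k c σ := by
  have hb : (basisMonomials (Fin 2) ℂ) σ = monomial σ 1 :=
    congrFun (coe_basisMonomials (Fin 2) ℂ) σ
  have : monomial σ a = a • (basisMonomials (Fin 2) ℂ) σ := by
    rw [hb, smul_monomial, smul_eq_mul, mul_one]
  rw [this, map_smul]
  show a • (Module.Basis.constr (basisMonomials (Fin 2) ℂ) ℂ (nf m k c)) _ = _
  rw [Module.Basis.constr_basis]

lemma hX : ∀ i : Fin 2, (X i : MvPolynomial (Fin 2) ℂ) = monomial (Finsupp.single i 1) 1 :=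
  fun _ => rfl

lemma hC : ∀ a : ℂ, (C a : MvPolynomial (Fin 2) ℂ) = monomial 0 a := fun _ => rfl

lemma psi_mul_gen1 (m k : ℕ) (c : ℂ) (σ : Fin 2 →₀ ℕ) :
    psi m k c (monomial σ 1 * (X 1 * X 0 ^ (m - k))) = 0 := by
  rw [X_pow_eq_monomial, hX, monomial_mul, monomial_mul, psi_monomial]
  simp only [mul_one, one_mul, one_smul]
  rw [nf_succ m k c (b := σ 1)
    (by simp [Finsupp.single_apply])]
  rw [dif_neg]
  have : ((σ + (Finsupp.single 1 1 + Finsupp.single 0 (m - k)) : Fin 2 →₀ ℕ)) 0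
      = σ 0 + (m - k) := by simp [Finsupp.single_apply]
  omega

lemma psi_mul_gen2 (m k : ℕ) (hk : k ≤ m) (c : ℂ) (σ : Fin 2 →₀ ℕ) :
    psi m k c (monomial σ 1 * (X 0 ^ m : MvPolynomial (Fin 2) ℂ)) = 0 := by
  rw [X_pow_eq_monomial, monomial_mul, psi_monomial, one_mul, one_smul]
  have h0 : ((σ + Finsupp.single 0 m : Fin 2 →₀ ℕ)) 0 = σ 0 + m := by
    simp [Finsupp.single_apply]
  have h1 : ((σ + Finsupp.single 0 m : Fin 2 →₀ ℕ)) 1 = σ 1 := by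
    simp [Finsupp.single_apply]
  rcases hb : σ 1 with _ | b
  · rw [nf_zero m k c (by omega), dif_neg (by omega)]
  · rw [nf_succ m k c (b := b) (by omega), dif_neg (by omega)]

lemma psi_mul_gen3 (m k d : ℕ) (c : ℂ) (hc : ((k : ℂ) - 1) * c = (d : ℂ)) (σ : Fin 2 →₀ ℕ) :
    psi m k c (monomial σ 1 *
      ((C (-(d : ℂ)) * X 0 + C ((k : ℂ) - 1) * X 1) * X 1)) = 0 := by
  have expand : monomial σ 1 * ((C (-(d : ℂ)) * X 0 + C ((k : ℂ) - 1) * X 1) * X 1)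
      = monomial (σ + (Finsupp.single 0 1 + Finsupp.single 1 1)) (-(d : ℂ))
        + monomial (σ + (Finsupp.single 1 1 + Finsupp.single 1 1)) ((k : ℂ) - 1) := by
    rw [hX 0, hX 1, hC, hC, add_mul, mul_add]
    simp only [mul_assoc, monomial_mul, zero_add, mul_one, one_mul]
  rw [expand, map_add, psi_monomial, psi_monomial]
  rw [nf_succ' m k c (b := σ 1) (j := σ 0 + σ 1 + 1)
      (by simp [Finsupp.single_apply]) (by simp [Finsupp.single_apply]; ring),
    nf_succ' m k c (b := σ 1 + 1) (j := σ 0 + σ 1 + 1)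
      (by simp [Finsupp.single_apply]) (by simp [Finsupp.single_apply]; ring)]
  by_cases h : σ 0 + σ 1 + 1 < m - k
  · rw [dif_pos h, dif_pos h, ← Pi.single_smul, ← Pi.single_smul, ← Pi.single_add]
    rw [show -(d:ℂ) • c ^ σ 1 + ((k:ℂ) - 1) • c ^ (σ 1 + 1) = 0 from by
      simp only [smul_eq_mul, pow_succ]; linear_combination c ^ σ 1 * hc]
    rw [Pi.single_zero]
  · rw [dif_neg h, dif_neg h, smul_zero, smul_zero, add_zero]


lemma psi_ker (m k d : ℕ) (hk : k ≤ m) (c : ℂ) (hc : ((k : ℂ) - 1) * c = (d : ℂ)) :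
    ∀ p ∈ SRIdeal m k d, psi m k c p = 0 := by
  have key : ∀ g ∈ ({X 1 * X 0 ^ (m - k), X 0 ^ m,
      (C (-(d : ℂ)) * X 0 + C ((k : ℂ) - 1) * X 1) * X 1} :
        Set (MvPolynomial (Fin 2) ℂ)), ∀ q, psi m k c (q * g) = 0 := by
    intro g hg
    have hcomp : (psi m k c).comp (LinearMap.mulRight ℂ g) = 0 := by
      apply Module.Basis.ext (basisMonomials (Fin 2) ℂ)
      intro σ
      rw [congrFun (coe_basisMonomials (Fin 2) ℂ) σ]
      simp only [LinearMap.comp_apply, LinearMap.mulRight_apply, LinearMap.zero_apply]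
      rcases hg with h | h | h <;> rw [h]
      · exact psi_mul_gen1 m k c σ
      · exact psi_mul_gen2 m k hk c σ
      · exact psi_mul_gen3 m k d c hc σ
    intro q
    have := LinearMap.congr_fun hcomp q
    simpa using this
  intro p hp
  have : ∀ (x : MvPolynomial (Fin 2) ℂ), x ∈ SRIdeal m k d →
      ∀ q, psi m k c (q * x) = 0 := by
    intro x hx
    refine Submodule.span_induction (p := fun x _ => ∀ q, psi m k c (q * x) = 0)
      ?_ ?_ ?_ ?_ hx
    · exact key
    · intro q; simp
    · intro a b _ _ ha hb q; rw [mul_add, map_add, ha, hb, add_zero]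
    · intro a x _ hx q
      rw [smul_eq_mul, ← mul_assoc]
      exact hx (q * a)
  simpa using this p hp 1

lemma mk_gen1 (m k d : ℕ) :
    Ideal.Quotient.mk (SRIdeal m k d) (X 1 * X 0 ^ (m - k)) = 0 :=
  Ideal.Quotient.eq_zero_iff_mem.mpr (Ideal.subset_span (by simp))

lemma mk_gen2 (m k d : ℕ) :
    Ideal.Quotient.mk (SRIdeal m k d) (X 0 ^ m) = 0 :=
  Ideal.Quotient.eq_zero_iff_mem.mpr (Ideal.subset_span (by simp))

lemma mk_gen3 (m k d : ℕ) :
    Ideal.Quotient.mk (SRIdeal m k d)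
      ((C (-(d : ℂ)) * X 0 + C ((k : ℂ) - 1) * X 1) * X 1) = 0 :=
  Ideal.Quotient.eq_zero_iff_mem.mpr (Ideal.subset_span (by simp))

lemma mk_u_pow (m k d : ℕ) {a : ℕ} (ha : m ≤ a) :
    Ideal.Quotient.mk (SRIdeal m k d) (X 0 ^ a) = 0 := by
  rw [show a = m + (a - m) by omega, pow_add, map_mul, mk_gen2, zero_mul]

lemma mk_eu_pow (m k d : ℕ) {a : ℕ} (ha : m - k ≤ a) :
    Ideal.Quotient.mk (SRIdeal m k d) (X 1 * X 0 ^ a) = 0 := by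
  rw [show a = (m - k) + (a - (m - k)) by omega, pow_add, ← mul_assoc, map_mul,
    mk_gen1, zero_mul]

lemma mk_smul (m k d : ℕ) (a : ℂ) (p : MvPolynomial (Fin 2) ℂ) :
    Ideal.Quotient.mk (SRIdeal m k d) (a • p)
      = a • Ideal.Quotient.mk (SRIdeal m k d) p := by
  have := map_smul (Ideal.Quotient.mkₐ ℂ (SRIdeal m k d)) a p
  rwa [Ideal.Quotient.mkₐ_eq_mk] at this

lemma mk_C_mul (m k d : ℕ) (a : ℂ) (p : MvPolynomial (Fin 2) ℂ) :
    Ideal.Quotient.mk (SRIdeal m k d) (C a * p)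
      = a • Ideal.Quotient.mk (SRIdeal m k d) p := by
  rw [← smul_eq_C_mul, mk_smul]

lemma mk_e_sq (m k d : ℕ) (hk : 2 ≤ k) (c : ℂ) (hc : ((k : ℂ) - 1) * c = (d : ℂ)) :
    Ideal.Quotient.mk (SRIdeal m k d) (X 1 * X 1)
      = c • Ideal.Quotient.mk (SRIdeal m k d) (X 0 * X 1) := by
  have hne : ((k : ℂ) - 1) ≠ 0 := by
    have : (k : ℂ) ≠ 1 := by exact_mod_cast (by omega : k ≠ 1)
    exact sub_ne_zero.mpr this
  have h0 : Ideal.Quotient.mk (SRIdeal m k d)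
      (C (-(d:ℂ)) * (X 0 * X 1) + C ((k:ℂ) - 1) * (X 1 * X 1)) = 0 := by
    rw [← mk_gen3 m k d]; congr 1; ring
  rw [map_add, mk_C_mul, mk_C_mul] at h0
  have h2 : ((k:ℂ) - 1) • Ideal.Quotient.mk (SRIdeal m k d) (X 1 * X 1)
      = ((k:ℂ) - 1) • (c • Ideal.Quotient.mk (SRIdeal m k d) (X 0 * X 1)) := by
    rw [smul_smul, hc]
    have := eq_neg_of_add_eq_zero_right h0
    rw [this, neg_smul, neg_neg]
  calc Ideal.Quotient.mk (SRIdeal m k d) (X 1 * X 1)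
      = ((k:ℂ) - 1)⁻¹ • (((k:ℂ) - 1) • Ideal.Quotient.mk (SRIdeal m k d) (X 1 * X 1)) :=
        (inv_smul_smul₀ hne _).symm
    _ = ((k:ℂ) - 1)⁻¹ • (((k:ℂ) - 1) • (c • Ideal.Quotient.mk (SRIdeal m k d) (X 0 * X 1))) := by
        rw [h2]
    _ = c • Ideal.Quotient.mk (SRIdeal m k d) (X 0 * X 1) := inv_smul_smul₀ hne _

lemma mk_L1 (m k d : ℕ) (hk : 2 ≤ k) (c : ℂ) (hc : ((k : ℂ) - 1) * c = (d : ℂ)) :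
    ∀ b a : ℕ, Ideal.Quotient.mk (SRIdeal m k d) (X 1 ^ (b + 1) * X 0 ^ a)
      = c ^ b • Ideal.Quotient.mk (SRIdeal m k d) (X 1 * X 0 ^ (a + b)) := by
  intro b
  induction b with
  | zero => intro a; simp
  | succ b ih =>
    intro a
    have e1 : (X 1 : MvPolynomial (Fin 2) ℂ) ^ (b + 1 + 1) * X 0 ^ a
        = (X 1 ^ (b + 1) * X 0 ^ a) * X 1 := by ring
    rw [e1, map_mul, ih, smul_mul_assoc, ← map_mul,
      show (X 1 : MvPolynomial (Fin 2) ℂ) * X 0 ^ (a + b) * X 1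
        = (X 1 * X 1) * X 0 ^ (a + b) from by ring,
      map_mul, mk_e_sq m k d hk c hc, smul_mul_assoc, smul_smul, ← map_mul,
      show (X 0 : MvPolynomial (Fin 2) ℂ) * X 1 * X 0 ^ (a + b)
        = X 1 * X 0 ^ (a + (b + 1)) from by ring, ← pow_succ]

lemma nf_zero' (m k : ℕ) (c : ℂ) {σ : Fin 2 →₀ ℕ} {j : ℕ} (h1 : σ 1 = 0) (h2 : σ 0 = j) :
    nf m k c σ = if h : j < m then Pi.single (Sum.inl ⟨j, h⟩) 1 else 0 := by
  subst h2; exact nf_zero m k c h1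

noncomputable def fam (m k d : ℕ) :
    Fin m ⊕ Fin (m - k) → MvPolynomial (Fin 2) ℂ ⧸ SRIdeal m k d
  | .inl i => Ideal.Quotient.mk _ (X 0 ^ (i : ℕ))
  | .inr j => Ideal.Quotient.mk _ (X 1 * X 0 ^ (j : ℕ))

noncomputable def phi (m k d : ℕ) :
    (Fin m ⊕ Fin (m - k) → ℂ) →ₗ[ℂ] MvPolynomial (Fin 2) ℂ ⧸ SRIdeal m k d :=
  (Pi.basisFun ℂ (Fin m ⊕ Fin (m - k))).constr ℂ (fam m k d)

lemma phi_single (m k d : ℕ) (i : Fin m ⊕ Fin (m - k)) (x : ℂ) :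
    phi m k d (Pi.single i x) = x • fam m k d i := by
  have h1 : Pi.single i x = x • (Pi.single i 1 : Fin m ⊕ Fin (m - k) → ℂ) := by
    rw [← Pi.single_smul, smul_eq_mul, mul_one]
  rw [h1, map_smul]
  congr 1
  rw [← Pi.basisFun_apply]
  exact Module.Basis.constr_basis _ _ _ _

lemma phi_nf (m k d : ℕ) (hk : 2 ≤ k) (hkm : k < m) (c : ℂ)
    (hc : ((k : ℂ) - 1) * c = (d : ℂ)) (σ : Fin 2 →₀ ℕ) :
    phi m k d (nf m k c σ) = Ideal.Quotient.mk (SRIdeal m k d) (monomial σ 1) := by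
  have hmono : (monomial σ (1 : ℂ)) = X 0 ^ (σ 0) * X 1 ^ (σ 1) := by
    have hσ : (Finsupp.single 0 (σ 0) + Finsupp.single 1 (σ 1) : Fin 2 →₀ ℕ) = σ := by
      ext i; fin_cases i <;> simp [Finsupp.single_apply]
    rw [X_pow_eq_monomial, X_pow_eq_monomial, monomial_mul, one_mul, hσ]
  rcases hb : σ 1 with _ | b
  · rw [nf_zero m k c hb, hmono, hb, pow_zero, mul_one]
    by_cases h0 : σ 0 < m
    · rw [dif_pos h0, phi_single, one_smul]; rfl
    · rw [dif_neg h0, map_zero, mk_u_pow m k d (by omega)]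
  · rw [nf_succ m k c hb, hmono, hb,
      show (X 0 : MvPolynomial (Fin 2) ℂ) ^ (σ 0) * X 1 ^ (b + 1)
        = X 1 ^ (b + 1) * X 0 ^ (σ 0) from by ring,
      mk_L1 m k d hk c hc b (σ 0)]
    by_cases h0 : σ 0 + b < m - k
    · rw [dif_pos h0, phi_single]; rfl
    · rw [dif_neg h0, map_zero, mk_eu_pow m k d (by omega), smul_zero]

lemma phi_psi (m k d : ℕ) (hk : 2 ≤ k) (hkm : k < m) (c : ℂ)
    (hc : ((k : ℂ) - 1) * c = (d : ℂ)) (p : MvPolynomial (Fin 2) ℂ) :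
    phi m k d (psi m k c p) = Ideal.Quotient.mk (SRIdeal m k d) p := by
  induction p using MvPolynomial.induction_on' with
  | monomial σ a =>
    rw [psi_monomial, map_smul, phi_nf m k d hk hkm c hc,
      show (monomial σ) a = a • monomial σ (1 : ℂ) from by
        rw [smul_monomial, smul_eq_mul, mul_one],
      mk_smul]
  | add p q hp hq => rw [map_add, map_add, hp, hq, map_add]

end SRAux

theorem stmt6 (m k d : ℕ) (hk : 2 ≤ k) (hkm : k < m) (hd : k ≤ d + 1) :
    ∃ B : Module.Basis (Fin m ⊕ Fin (m - k)) ℂ (MvPolynomial (Fin 2) ℂ ⧸ SRIdeal m k d),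
      (∀ i : Fin m, B (Sum.inl i) = Ideal.Quotient.mk (SRIdeal m k d) (X 0 ^ (i : ℕ))) ∧
      (∀ i : Fin (m - k),
        B (Sum.inr i) = Ideal.Quotient.mk (SRIdeal m k d) (X 1 * X 0 ^ (i : ℕ))) := by
  classical
  have hne : ((k : ℂ) - 1) ≠ 0 :=
    sub_ne_zero.mpr (by exact_mod_cast (by omega : k ≠ 1))
  set c : ℂ := (d : ℂ) / ((k : ℂ) - 1) with hcdef
  have hc : ((k : ℂ) - 1) * c = (d : ℂ) := by
    rw [hcdef]; field_simp
  let ψ' : (MvPolynomial (Fin 2) ℂ ⧸ SRIdeal m k d) →ₗ[ℂ] (Fin m ⊕ Fin (m - k) → ℂ) :=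
    (Submodule.liftQ ((SRIdeal m k d).restrictScalars ℂ) (SRAux.psi m k c)
      (fun p hp => LinearMap.mem_ker.mpr
        (SRAux.psi_ker m k d (le_of_lt hkm) c hc p hp))).comp
      (Submodule.Quotient.restrictScalarsEquiv ℂ (SRIdeal m k d)).symm.toLinearMap
  have hψ'mk : ∀ p, ψ' (Ideal.Quotient.mk (SRIdeal m k d) p) = SRAux.psi m k c p :=
    fun p => rfl
  have h1 : (SRAux.phi m k d).comp ψ' = LinearMap.id := by
    apply LinearMap.ext; intro q
    obtain ⟨p, rfl⟩ := Ideal.Quotient.mk_surjective q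
    simp only [LinearMap.comp_apply, LinearMap.id_apply]
    rw [hψ'mk, SRAux.phi_psi m k d hk hkm c hc]
  have h2 : ψ'.comp (SRAux.phi m k d) = LinearMap.id := by
    apply Module.Basis.ext (Pi.basisFun ℂ (Fin m ⊕ Fin (m - k)))
    intro i
    simp only [LinearMap.comp_apply, LinearMap.id_apply, Pi.basisFun_apply]
    rw [SRAux.phi_single, one_smul]
    cases i with
    | inl i =>
      show ψ' (Ideal.Quotient.mk (SRIdeal m k d) (X 0 ^ (i : ℕ))) = _
      rw [hψ'mk, X_pow_eq_monomial, SRAux.psi_monomial, one_smul,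
        SRAux.nf_zero' m k c (by simp [Finsupp.single_apply]) (by simp : _ = (i : ℕ)),
        dif_pos i.isLt]
    | inr j =>
      show ψ' (Ideal.Quotient.mk (SRIdeal m k d) (X 1 * X 0 ^ (j : ℕ))) = _
      rw [hψ'mk, SRAux.hX 1, X_pow_eq_monomial, monomial_mul, one_mul,
        SRAux.psi_monomial, one_smul,
        SRAux.nf_succ' m k c (b := 0) (j := (j : ℕ))
          (by simp [Finsupp.single_apply]) (by simp [Finsupp.single_apply]),
        dif_pos j.isLt, pow_zero]
  let equiv : (Fin m ⊕ Fin (m - k) → ℂ) ≃ₗ[ℂ] (MvPolynomial (Fin 2) ℂ ⧸ SRIdeal m k d) :=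
    LinearEquiv.ofLinear (SRAux.phi m k d) ψ' h1 h2
  refine ⟨(Pi.basisFun ℂ (Fin m ⊕ Fin (m - k))).map equiv, fun i => ?_, fun i => ?_⟩ <;>
  · rw [Module.Basis.map_apply, Pi.basisFun_apply]
    show SRAux.phi m k d _ = _
    rw [SRAux.phi_single, one_smul]
    rfl
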